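/- Let φ : ℝ^d → ℝ satisfy φ(v') + φ(v'⋆) = φ(v) + φ(v⋆) for all v, v⋆ ∈ ℝ^d and all σ ∈ S^{d-1} (with v', v'⋆ the post-collisional velocities). If φ is continuous, then φ(v) = a + b·v + c|v|² for some constants a, c ∈ ℝ, b ∈ ℝ^d. -/

import Mathlib

open scoped RealInnerProductSpace

lemma collinv_exists_unit_orth (d : ℕ) (hd : 2 ≤ d) (x : EuclideanSpace ℝ (Fin d)) :
    ∃ σ : EuclideanSpace ℝ (Fin d), ‖σ‖ = 1 ∧ ⟪x, σ⟫ = 0 := by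
  have h0 : (0 : ℕ) < d := by omega
  have h1 : (1 : ℕ) < d := by omega
  set i0 : Fin d := ⟨0, h0⟩
  set i1 : Fin d := ⟨1, h1⟩
  have hne : i0 ≠ i1 := by simp [i0, i1, Fin.ext_iff]
  by_cases h : x i0 = 0
  · refine ⟨EuclideanSpace.single i0 1, ?_, ?_⟩
    · simp [EuclideanSpace.norm_single]
    · rw [EuclideanSpace.inner_single_right]
      simp [h]
  · set y : EuclideanSpace ℝ (Fin d) :=
      x i1 • EuclideanSpace.single i0 (1:ℝ) - x i0 • EuclideanSpace.single i1 (1:ℝ) with hy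
    have hyi1 : y i1 = -x i0 := by
      simp [hy, EuclideanSpace.single_apply, hne, Ne.symm hne]
    have hyne : y ≠ 0 := by
      intro hc
      apply h
      have h2 : y i1 = 0 := by rw [hc]; rfl
      rw [hyi1] at h2
      linarith
    have hny : ‖y‖ ≠ 0 := norm_ne_zero_iff.mpr hyne
    refine ⟨‖y‖⁻¹ • y, ?_, ?_⟩
    · rw [norm_smul]
      simp [hny]
    · rw [real_inner_smul_right]
      have : ⟪x, y⟫ = 0 := by
        rw [hy, inner_sub_right, real_inner_smul_right, real_inner_smul_right,
          EuclideanSpace.inner_single_right, EuclideanSpace.inner_single_right]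
        simp
        ring
      rw [this]; ring

theorem collision_invariants_classification
    (d : ℕ) (hd : 2 ≤ d)
    (φ : EuclideanSpace ℝ (Fin d) → ℝ) (hφ : Continuous φ)
    (hinv : ∀ (v vs σ : EuclideanSpace ℝ (Fin d)), ‖σ‖ = 1 →
      φ ((2 : ℝ)⁻¹ • (v + vs) + (2 : ℝ)⁻¹ • (‖v - vs‖ • σ)) +
        φ ((2 : ℝ)⁻¹ • (v + vs) - (2 : ℝ)⁻¹ • (‖v - vs‖ • σ))
      = φ v + φ vs) :
    ∃ (a c : ℝ) (b : EuclideanSpace ℝ (Fin d)),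
      ∀ v, φ v = a + ⟪b, v⟫ + c * ‖v‖ ^ 2 := by
  classical
  -- orthogonal additivity of φ (up to φ 0)
  have horth : ∀ x y : EuclideanSpace ℝ (Fin d), ⟪x, y⟫ = 0 →
      φ (x + y) + φ 0 = φ x + φ y := by
    intro x y hxy
    by_cases hxyeq : x = y
    · have hx0 : x = 0 := by
        subst hxyeq
        exact inner_self_eq_zero.mp hxy
      subst hx0
      rw [← hxyeq] at *
      simp
    · have hne : x - y ≠ 0 := sub_ne_zero.mpr hxyeq
      have hn : ‖x - y‖ ≠ 0 := norm_ne_zero_iff.mpr hne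
      have hσ : ‖(‖x - y‖⁻¹ • (x - y))‖ = 1 := by
        rw [norm_smul]
        simp [abs_of_nonneg (inv_nonneg.mpr (norm_nonneg _)), inv_mul_cancel₀ hn]
      have key := hinv (x + y) 0 (‖x - y‖⁻¹ • (x - y)) hσ
      have hnorm : ‖x + y - 0‖ = ‖x - y‖ := by
        rw [sub_zero]
        have h1 : ‖x + y‖ ^ 2 = ‖x - y‖ ^ 2 := by
          rw [norm_add_sq_real, norm_sub_sq_real, hxy]; ring
        have h2 := congrArg Real.sqrt h1
        rwa [Real.sqrt_sq (norm_nonneg _), Real.sqrt_sq (norm_nonneg _)] at h2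
      rw [hnorm] at key
      have hsm : ‖x - y‖ • (‖x - y‖⁻¹ • (x - y)) = x - y := by
        rw [smul_smul, mul_inv_cancel₀ hn, one_smul]
      rw [hsm] at key
      have e1 : (2:ℝ)⁻¹ • (x + y + 0) + (2:ℝ)⁻¹ • (x - y) = x := by
        rw [add_zero]; module
      have e2 : (2:ℝ)⁻¹ • (x + y + 0) - (2:ℝ)⁻¹ • (x - y) = y := by
        rw [add_zero]; module
      rw [e1, e2] at key
      linarith
  set O : EuclideanSpace ℝ (Fin d) → ℝ := fun x => φ x - φ (-x) with hO
  set Ev : EuclideanSpace ℝ (Fin d) → ℝ := fun x => φ x + φ (-x) - 2 * φ 0 with hEv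
  have hOneg : ∀ x, O (-x) = - O x := by
    intro x; simp [hO]
  have hEvneg : ∀ x, Ev (-x) = Ev x := by
    intro x; simp [hEv]; ring
  have hO_orth : ∀ x y : EuclideanSpace ℝ (Fin d), ⟪x, y⟫ = 0 → O (x + y) = O x + O y := by
    intro x y hxy
    have h1 := horth x y hxy
    have h2 := horth (-x) (-y) (by rw [inner_neg_neg]; exact hxy)
    have hn : -x + -y = -(x + y) := by abel
    rw [hn] at h2
    simp only [hO]
    linarith
  have hEv_orth : ∀ x y : EuclideanSpace ℝ (Fin d), ⟪x, y⟫ = 0 → Ev (x + y) = Ev x + Ev y := by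
    intro x y hxy
    have h1 := horth x y hxy
    have h2 := horth (-x) (-y) (by rw [inner_neg_neg]; exact hxy)
    have hn : -x + -y = -(x + y) := by abel
    rw [hn] at h2
    simp only [hEv]
    linarith
  have hEv_norm : ∀ u w : EuclideanSpace ℝ (Fin d), ‖u‖ = ‖w‖ → Ev u = Ev w := by
    intro u w huw
    set x := (2:ℝ)⁻¹ • (u + w) with hx
    set y := (2:ℝ)⁻¹ • (u - w) with hy2
    have hinner : ⟪x, y⟫ = 0 := by
      rw [hx, hy2, real_inner_smul_left, real_inner_smul_right]
      have : ⟪u + w, u - w⟫ = ‖u‖^2 - ‖w‖^2 := by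
        rw [inner_sub_right, inner_add_left, inner_add_left,
          real_inner_self_eq_norm_sq, real_inner_self_eq_norm_sq,
          real_inner_comm w u]
        ring
      rw [this, huw]; ring
    have hxy1 : x + y = u := by rw [hx, hy2]; module
    have hxy2 : x + (-y) = w := by rw [hx, hy2]; module
    have h1 := hO_orth x y hinner
    have e1 := hEv_orth x y hinner
    have e2 := hEv_orth x (-y) (by rw [inner_neg_right, hinner, neg_zero])
    rw [hxy1] at e1
    rw [hxy2] at e2
    rw [hEvneg] at e2
    linarith
  -- odd part is additive
  have hO_two : ∀ x : EuclideanSpace ℝ (Fin d), O ((2:ℝ) • x) = 2 * O x := by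
    intro x
    obtain ⟨σ, hσ1, hσ2⟩ := collinv_exists_unit_orth d hd x
    set y := ‖x‖ • σ with hy
    have hxy : ⟪x, y⟫ = 0 := by rw [hy, real_inner_smul_right, hσ2]; ring
    have hny : ‖y‖ = ‖x‖ := by
      rw [hy, norm_smul, hσ1]; simp [abs_of_nonneg (norm_nonneg x)]
    have hio : ⟪x + y, x - y⟫ = 0 := by
      rw [inner_sub_right, inner_add_left, inner_add_left,
        real_inner_self_eq_norm_sq, real_inner_self_eq_norm_sq,
        hny]
      rw [real_inner_comm y x]
      ring
    have h1 := hO_orth (x + y) (x - y) hio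
    have h2 := hO_orth x y hxy
    have h3 := hO_orth x (-y) (by rw [inner_neg_right, hxy, neg_zero])
    have e1 : x + y + (x - y) = (2:ℝ) • x := by module
    have e2 : x + -y = x - y := by abel
    rw [e1] at h1
    rw [e2] at h3
    rw [hOneg] at h3
    linarith
  have hO_add : ∀ u v : EuclideanSpace ℝ (Fin d), O (u + v) = O u + O v := by
    intro u v
    set m := (2:ℝ)⁻¹ • (u + v) with hm
    obtain ⟨σ, hσ1, hσ2⟩ := collinv_exists_unit_orth d hd m
    have key1 := hinv u v σ hσ1
    have key2 := hinv (-u) (-v) σ hσ1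
    have hn2 : ‖-u - -v‖ = ‖u - v‖ := by
      rw [show -u - -v = -(u - v) by abel, norm_neg]
    rw [hn2] at key2
    have hmm : (2:ℝ)⁻¹ • (-u + -v) = -m := by rw [hm]; module
    rw [hmm] at key2
    set w := (2:ℝ)⁻¹ • (‖u - v‖ • σ) with hw
    rw [← hm] at key1
    have hm1 : -m + w = -(m - w) := by abel
    have hm2 : -m - w = -(m + w) := by abel
    rw [hm1, hm2] at key2
    have hOsum : O (m + w) + O (m - w) = O u + O v := by
      simp only [hO]; linarith
    have hmw : ⟪m, w⟫ = 0 := by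
      rw [hw, real_inner_smul_right, real_inner_smul_right, hσ2]; ring
    have h2 := hO_orth m w hmw
    have h3 := hO_orth m (-w) (by rw [inner_neg_right, hmw, neg_zero])
    have e2 : m + -w = m - w := by abel
    rw [e2] at h3
    rw [hOneg] at h3
    have h4 := hO_two m
    have e4 : (2:ℝ) • m = u + v := by rw [hm]; module
    rw [e4] at h4
    linarith
  -- O is continuous, hence linear
  have hOcont : Continuous O := by
    simp only [hO]
    exact hφ.sub (hφ.comp continuous_neg)
  set OL : EuclideanSpace ℝ (Fin d) →L[ℝ] ℝ :=
    (AddMonoidHom.mk' O hO_add).toRealLinearMap hOcont with hOL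
  have hOLval : ∀ v, OL v = O v := by
    intro v
    rw [hOL]
    rfl
  set b0 : EuclideanSpace ℝ (Fin d) :=
    (InnerProductSpace.toDual ℝ (EuclideanSpace ℝ (Fin d))).symm OL with hb0
  have hb0v : ∀ v, ⟪b0, v⟫ = O v := by
    intro v
    rw [hb0, InnerProductSpace.toDual_symm_apply]
    exact hOLval v
  -- even part
  have h0 : (0:ℕ) < d := by omega
  have h1 : (1:ℕ) < d := by omega
  set i0 : Fin d := ⟨0, h0⟩
  set i1 : Fin d := ⟨1, h1⟩
  have hne : i0 ≠ i1 := by simp [i0, i1, Fin.ext_iff]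
  set E0 : EuclideanSpace ℝ (Fin d) := EuclideanSpace.single i0 1 with hE0
  set E1 : EuclideanSpace ℝ (Fin d) := EuclideanSpace.single i1 1 with hE1
  have hnE0 : ‖E0‖ = 1 := by rw [hE0, EuclideanSpace.norm_single]; norm_num
  have hnE1 : ‖E1‖ = 1 := by rw [hE1, EuclideanSpace.norm_single]; norm_num
  have hE01 : ⟪E0, E1⟫ = 0 := by
    rw [hE0, hE1, EuclideanSpace.inner_single_right]
    simp [EuclideanSpace.single_apply, hne, Ne.symm hne]
  set k : ℝ → ℝ := fun t => Ev (Real.sqrt t • E0) with hkdef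
  have hnsm : ∀ t : ℝ, ‖Real.sqrt t • E0‖ = Real.sqrt t := by
    intro t
    rw [norm_smul, hnE0, Real.norm_eq_abs, abs_of_nonneg (Real.sqrt_nonneg t)]
    ring
  have hk : ∀ s t : ℝ, 0 ≤ s → 0 ≤ t → k (s + t) = k s + k t := by
    intro s t hs ht
    set x := Real.sqrt s • E0 with hx
    set y := Real.sqrt t • E1 with hy
    have hxy : ⟪x, y⟫ = 0 := by
      rw [hx, hy, real_inner_smul_left, real_inner_smul_right, hE01]; ring
    have hnx : ‖x‖ = Real.sqrt s := hnsm s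
    have hny : ‖y‖ = Real.sqrt t := by
      rw [hy, norm_smul, hnE1, Real.norm_eq_abs, abs_of_nonneg (Real.sqrt_nonneg t)]; ring
    have hEy : Ev y = k t := by
      apply hEv_norm
      rw [hny, hnsm]
    have hxynorm : ‖x + y‖ = Real.sqrt (s + t) := by
      have hsq : ‖x + y‖ ^ 2 = s + t := by
        rw [norm_add_sq_real, hxy, hnx, hny, Real.sq_sqrt hs, Real.sq_sqrt ht]; ring
      have := congrArg Real.sqrt hsq
      rwa [Real.sqrt_sq (norm_nonneg _)] at this
    have hExy : Ev (x + y) = k (s + t) := by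
      apply hEv_norm
      rw [hxynorm, hnsm]
    have := hEv_orth x y hxy
    rw [hExy, hEy] at this
    rw [this]
  have hk0 : k 0 = 0 := by
    simp only [hkdef, Real.sqrt_zero, zero_smul, hEv, neg_zero]
    ring
  -- extend k to an additive function on ℝ
  set F : ℝ → ℝ := fun t => k (max t 0) - k (max (-t) 0) with hF
  have hFpos : ∀ t : ℝ, 0 ≤ t → F t = k t := by
    intro t ht
    simp only [hF]
    rw [max_eq_left ht, max_eq_right (by linarith : -t ≤ 0), hk0, sub_zero]
  have hFadd : ∀ s t : ℝ, F (s + t) = F s + F t := by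
    intro s t
    have hmx : ∀ a : ℝ, max a 0 - max (-a) 0 = a := fun a => max_zero_sub_max_neg_zero_eq_self a
    have hnn : ∀ a : ℝ, (0:ℝ) ≤ max a 0 := fun a => le_max_right a 0
    have e : max (s + t) 0 + (max (-s) 0 + max (-t) 0)
        = max (-(s + t)) 0 + (max s 0 + max t 0) := by
      have e1 := hmx (s + t); have e2 := hmx s; have e3 := hmx t
      linarith
    have h1 := hk (max (s + t) 0) (max (-s) 0 + max (-t) 0) (hnn _)
      (add_nonneg (hnn _) (hnn _))
    have h2 := hk (max (-s) 0) (max (-t) 0) (hnn _) (hnn _)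
    have h3 := hk (max (-(s + t)) 0) (max s 0 + max t 0) (hnn _)
      (add_nonneg (hnn _) (hnn _))
    have h4 := hk (max s 0) (max t 0) (hnn _) (hnn _)
    rw [e] at h1
    rw [h3] at h1
    rw [h2, h4] at h1
    simp only [hF]
    linarith
  have hEvcont : Continuous Ev := by
    simp only [hEv]
    exact (hφ.add (hφ.comp continuous_neg)).sub continuous_const
  have hFcont : Continuous F := by
    simp only [hF]
    have hkc : ∀ g : ℝ → ℝ, Continuous g → Continuous (fun t => k (g t)) := by
      intro g hg
      exact hEvcont.comp ((Real.continuous_sqrt.comp hg).smul continuous_const)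
    exact (hkc _ (continuous_id.max continuous_const)).sub
      (hkc _ (continuous_neg.max continuous_const))
  set FL : ℝ →L[ℝ] ℝ := (AddMonoidHom.mk' F hFadd).toRealLinearMap hFcont with hFL
  have hFLval : ∀ t, FL t = F t := by
    intro t
    rw [hFL]
    rfl
  have hFlin : ∀ t : ℝ, F t = t * F 1 := by
    intro t
    have : FL t = t • FL 1 := by
      rw [show (t : ℝ) = t • (1:ℝ) by simp, map_smul]
      simp
    rw [hFLval, hFLval] at this
    rw [this]
    simp
  have hEvfinal : ∀ x : EuclideanSpace ℝ (Fin d), Ev x = F 1 * ‖x‖ ^ 2 := by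
    intro x
    have h1 : Ev x = Ev (‖x‖ • E0) := by
      apply hEv_norm
      rw [norm_smul, hnE0, Real.norm_eq_abs, abs_of_nonneg (norm_nonneg x)]; ring
    have h2 : Ev (‖x‖ • E0) = k (‖x‖ ^ 2) := by
      simp only [hkdef]
      rw [Real.sqrt_sq (norm_nonneg x)]
    rw [h1, h2, ← hFpos _ (sq_nonneg _), hFlin]
    ring
  -- final assembly
  refine ⟨φ 0, F 1 / 2, (2⁻¹ : ℝ) • b0, fun v => ?_⟩
  have hbv := hb0v v
  have hin : ⟪(2⁻¹ : ℝ) • b0, v⟫ = 2⁻¹ * ⟪b0, v⟫ := real_inner_smul_left _ _ _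
  have hEvv := hEvfinal v
  have hO' : O v = φ v - φ (-v) := rfl
  have hEv' : Ev v = φ v + φ (-v) - 2 * φ 0 := rfl
  rw [hEv'] at hEvv
  have h5 : F 1 / 2 * ‖v‖ ^ 2 = (φ v + φ (-v) - 2 * φ 0) / 2 := by rw [hEvv]; ring
  rw [hin, hbv, hO', h5]
  linarith
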